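/- Let i, j be integers with 2 ≤ i < j. Then the conductor of the numerical semigroup Λ_{{i,…,j}} generated by the interval {i, i+1, …, j} equals i·⌊(j−2)/(j−i)⌋. -/

import Mathlib

open Pointwise

namespace NumSgpPaper

/-- `S` is a numerical semigroup: an additive submonoid of ℕ with finite complement. -/
structure IsNumSgp (S : Set ℕ) : Prop where
  zero_mem : 0 ∈ S
  add_mem : ∀ ⦃a b : ℕ⦄, a ∈ S → b ∈ S → a + b ∈ S
  cofinite : Sᶜ.Finite

/-- The Frobenius number: the largest gap of `S` (junk value `0` if there are no gaps). -/
noncomputable def frob (S : Set ℕ) : ℕ := sSup Sᶜ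

open Classical in
/-- The conductor: one plus the largest gap, and `0` if there are no gaps (so `c(ℕ) = 0`). -/
noncomputable def conductor (S : Set ℕ) : ℕ := if Sᶜ = ∅ then 0 else frob S + 1

/-- The genus: the number of gaps. -/
noncomputable def genus (S : Set ℕ) : ℕ := Sᶜ.ncard

/-- The multiplicity: the smallest positive element. -/
noncomputable def mult (S : Set ℕ) : ℕ := sInf {n : ℕ | n ∈ S ∧ 0 < n}

/-- The jump: the difference between the second and first positive elements. -/
noncomputable def jump (S : Set ℕ) : ℕ := sInf {n : ℕ | n ∈ S ∧ mult S < n} - mult S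

/-- A minimal generator: a positive element of `S` that is not the sum of
two positive elements of `S`. -/
def IsMinGen (S : Set ℕ) (x : ℕ) : Prop :=
  0 < x ∧ x ∈ S ∧ ¬ ∃ a b : ℕ, 0 < a ∧ 0 < b ∧ a ∈ S ∧ b ∈ S ∧ a + b = x

/-- A right generator: a minimal generator larger than the Frobenius number. -/
def IsRightGen (S : Set ℕ) (x : ℕ) : Prop := IsMinGen S x ∧ frob S < x

/-- A strong generator: a right generator `σ` such that `σ + m(S)` is a minimal
generator of `S \ {σ}`. -/
def IsStrongGen (S : Set ℕ) (σ : ℕ) : Prop :=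
  IsRightGen S σ ∧ IsMinGen (S \ {σ}) (σ + mult S)

/-- `S` is ordinary when its gaps are exactly `{1, …, g(S)}`. -/
def IsOrdinary (S : Set ℕ) : Prop := Sᶜ = Set.Icc 1 (genus S)

/-- The left elements: the elements of `S` smaller than the Frobenius number. -/
def leftEls (S : Set ℕ) : Set ℕ := {x : ℕ | x ∈ S ∧ x < frob S}

/-- The gcd of a set of natural numbers. -/
noncomputable def setGcd (A : Set ℕ) : ℕ :=
  sInf {d : ℕ | (∀ a ∈ A, d ∣ a) ∧ ∀ e : ℕ, (∀ a ∈ A, e ∣ a) → e ∣ d}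

/-- `ω(S)`: the gcd of the left elements of `S`. -/
noncomputable def omega' (S : Set ℕ) : ℕ := setGcd (leftEls S)

/-- The shrinking of `S`: the additive submonoid of ℕ generated by the left
elements divided by their gcd. -/
noncomputable def shrink (S : Set ℕ) : Set ℕ :=
  (AddSubmonoid.closure ((fun x => x / omega' S) '' leftEls S) : AddSubmonoid ℕ)

/-- `T` is a descendant of `S`: a numerical semigroup contained in `S` all of whose
missing elements lie beyond the Frobenius number of `S`. -/
def IsDescendant (S T : Set ℕ) : Prop :=
  IsNumSgp T ∧ T ⊆ S ∧ ∀ x ∈ S \ T, frob S < x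

/-- The pseudo-ordinary semigroup `P_{m,u} = {0, m} ∪ {n : n ≥ m + u}`. -/
def P (m u : ℕ) : Set ℕ := {0, m} ∪ {n : ℕ | m + u ≤ n}

/-- The submonoid of ℕ generated by the interval `{a, …, b}`. -/
def intervalSgp (a b : ℕ) : Set ℕ := (AddSubmonoid.closure (Set.Icc a b) : AddSubmonoid ℕ)


lemma mem_intervalSgp_iff (i j n : ℕ) (hij : i ≤ j) :
    n ∈ intervalSgp i j ↔ ∃ k, k * i ≤ n ∧ n ≤ k * j := by
  constructor
  · intro hn
    have hn' : n ∈ AddSubmonoid.closure (Set.Icc i j) := hn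
    clear hn
    induction hn' using AddSubmonoid.closure_induction with
    | mem x hx =>
      simp only [Set.mem_Icc] at hx
      exact ⟨1, by omega⟩
    | zero => exact ⟨0, by simp⟩
    | add a b ha hb iha ihb =>
      obtain ⟨k1, h1, h2⟩ := iha
      obtain ⟨k2, h3, h4⟩ := ihb
      exact ⟨k1 + k2, by rw [add_mul]; omega, by rw [add_mul]; omega⟩
  · rintro ⟨k, h1, h2⟩
    show n ∈ AddSubmonoid.closure (Set.Icc i j)
    induction k generalizing n with
    | zero =>
      simp only [Nat.zero_mul, Nat.le_zero] at h2
      subst h2; exact AddSubmonoid.zero_mem _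
    | succ k ih =>
      by_cases hc : n ≤ k * i + j
      · have hmem : n - k * i ∈ Set.Icc i j := by
          simp only [Set.mem_Icc]
          constructor <;> [skip; omega]
          have : (k + 1) * i = k * i + i := by ring
          omega
        have : n = (n - k * i) + k * i := by
          have : (k + 1) * i = k * i + i := by ring
          omega
        rw [this]
        exact AddSubmonoid.add_mem _ (AddSubmonoid.subset_closure hmem)
          (ih _ (le_refl _) (Nat.mul_le_mul_left k hij))
      · have hmem : j ∈ Set.Icc i j := Set.mem_Icc.mpr ⟨hij, le_refl _⟩
        have : n = j + (n - j) := by omega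
        rw [this]
        refine AddSubmonoid.add_mem _ (AddSubmonoid.subset_closure hmem) (ih _ (by omega) ?_)
        have : (k + 1) * j = k * j + j := by ring
        omega

/-- The conductor of the semigroup generated by the interval `{i, …, j}`
is `i·⌊(j-2)/(j-i)⌋`. -/
theorem stmt8 (i j : ℕ) (h2 : 2 ≤ i) (hij : i < j) :
    conductor (intervalSgp i j) = i * ((j - 2) / (j - i)) := by
  set S := intervalSgp i j with hS
  set q := (j - 2) / (j - i) with hq
  have hd : 0 < j - i := by omega
  have hq1 : q * (j - i) ≤ j - 2 := Nat.div_mul_le_self _ _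
  have hq2 : j - 2 < q * (j - i) + (j - i) := by
    have hmod : (j - i) * q + (j - 2) % (j - i) = j - 2 := Nat.div_add_mod _ _
    have hml : (j - 2) % (j - i) < j - i := Nat.mod_lt _ hd
    have hcomm : (j - i) * q = q * (j - i) := Nat.mul_comm _ _
    omega
  have hkey : i - 1 ≤ q * (j - i) := by omega
  have hq0 : 1 ≤ q := (Nat.one_le_div_iff hd).mpr (by omega)
  have hiq : 2 ≤ i * q := by
    calc 2 ≤ i * 1 := by omega
    _ ≤ i * q := Nat.mul_le_mul_left i hq0
  -- (A) everything ≥ i*q is in S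
  have hA : ∀ n, i * q ≤ n → n ∈ S := by
    intro n hn
    rw [hS, mem_intervalSgp_iff i j n (le_of_lt hij)]
    refine ⟨n / i, Nat.div_mul_le_self n i, ?_⟩
    have h0 : n / i * i ≤ n := Nat.div_mul_le_self n i
    have hk : q ≤ n / i := by
      rw [Nat.le_div_iff_mul_le (by omega)]
      have : q * i = i * q := Nat.mul_comm _ _
      omega
    have h1 : i * (n / i) + n % i = n := Nat.div_add_mod n i
    have h1' : i * (n / i) = n / i * i := Nat.mul_comm _ _
    have h1'' : n % i < i := Nat.mod_lt _ (by omega)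
    have h2' : i - 1 ≤ (n / i) * (j - i) :=
      le_trans hkey (Nat.mul_le_mul_right _ hk)
    have h3 : (n / i) * j = (n / i) * i + (n / i) * (j - i) := by
      rw [← Nat.mul_add]; congr 1; omega
    omega
  -- (B) i*q - 1 is not in S
  have hB : i * q - 1 ∉ S := by
    rw [hS, mem_intervalSgp_iff i j _ (le_of_lt hij)]
    rintro ⟨k, h1, h2⟩
    have hk : k ≤ q - 1 := by
      by_contra hk'
      have hqk : q ≤ k := by omega
      have hm : q * i ≤ k * i := Nat.mul_le_mul_right i hqk
      have : q * i = i * q := Nat.mul_comm _ _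
      omega
    have h3 : k * j ≤ (q - 1) * j := Nat.mul_le_mul_right _ hk
    have h4 : (q - 1) * j = q * j - j := by
      rw [Nat.sub_mul, one_mul]
    have h5 : q * j = q * i + q * (j - i) := by
      rw [← Nat.mul_add]; congr 1; omega
    have h6 : q * i = i * q := Nat.mul_comm _ _
    omega
  have hne : (Sᶜ).Nonempty := ⟨i * q - 1, hB⟩
  have hbdd : ∀ n ∈ Sᶜ, n ≤ i * q - 1 := by
    intro n hn
    by_contra h
    exact hn (hA n (by omega))
  have hfrob : frob S = i * q - 1 := by
    refine le_antisymm (csSup_le hne hbdd) (le_csSup ⟨i * q - 1, hbdd⟩ hB)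
  rw [conductor, if_neg hne.ne_empty, hfrob]
  omega

end NumSgpPaper
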